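/- Let A = KQ/I be a bounded quiver algebra and let a_1 a_2 ⋯ a_l be a 2-truncated oriented cycle in A of minimal length. Then for every m ≥ 1 the l rotations (a_1, …, a_l, …, a_1, …, a_l), (a_2, …, a_1, …, a_2, …, a_1), …, (a_l, …, a_{l−1}, …, a_l, …, a_{l−1}) of the (lm)-tuple obtained by repeating the cycle m times are K-linearly independent elements of C̄_S(A)_{lm−1} = A ⊗_{S^e} J^{⊗_S (lm−1)}. -/

import Mathlib

set_option maxHeartbeats 1000000
set_option synthInstance.maxHeartbeats 400000

/-!
Bounded quiver algebras `A = KQ/I`, truncated oriented cycles, and Hochschild homology.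
-/

universe u

open Quiver
open scoped TensorProduct
open PiTensorProduct

section PathAlgebra

variable (K : Type u) [Field K]
variable (V : Type u) [Quiver.{u} V]

/-- The standard presentation relations of the path algebra `KQ` of a quiver `Q`:
the trivial paths `e v` are orthogonal idempotents summing to `1`, and each arrow
`a : v ⟶ w` satisfies `e v * a = a` and `a * e w = a`.  (Multiplication is written
in the order of path composition: `p * q` is "`p` then `q`".) -/
inductive PathAlgRel [Fintype V] :
    FreeAlgebra K (V ⊕ Σ v : V, Σ w : V, v ⟶ w) →
    FreeAlgebra K (V ⊕ Σ v : V, Σ w : V, v ⟶ w) → Prop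
  | idem (v : V) : PathAlgRel
      (FreeAlgebra.ι K (.inl v) * FreeAlgebra.ι K (.inl v)) (FreeAlgebra.ι K (.inl v))
  | orth (v w : V) (h : v ≠ w) : PathAlgRel
      (FreeAlgebra.ι K (.inl v) * FreeAlgebra.ι K (.inl w)) 0
  | sum_idem : PathAlgRel (∑ v : V, FreeAlgebra.ι K (.inl v)) 1
  | left {v w : V} (a : v ⟶ w) : PathAlgRel
      (FreeAlgebra.ι K (.inl v) * FreeAlgebra.ι K (.inr ⟨v, w, a⟩))
      (FreeAlgebra.ι K (.inr ⟨v, w, a⟩))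
  | right {v w : V} (a : v ⟶ w) : PathAlgRel
      (FreeAlgebra.ι K (.inr ⟨v, w, a⟩) * FreeAlgebra.ι K (.inl w))
      (FreeAlgebra.ι K (.inr ⟨v, w, a⟩))

variable [Fintype V]

/-- The path algebra `KQ` of the quiver `Q`, presented by trivial paths and arrows. -/
abbrev PathAlg := RingQuot (PathAlgRel K V)

/-- The trivial path `e v` as an element of the path algebra. -/
noncomputable def paE (v : V) : PathAlg K V :=
  RingQuot.mkAlgHom K (PathAlgRel K V) (FreeAlgebra.ι K (.inl v))

/-- An arrow as an element of the path algebra. -/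
noncomputable def paArrow {v w : V} (a : v ⟶ w) : PathAlg K V :=
  RingQuot.mkAlgHom K (PathAlgRel K V) (FreeAlgebra.ι K (.inr ⟨v, w, a⟩))

/-- A path as an element of the path algebra. -/
noncomputable def paPath : {v w : V} → Path v w → PathAlg K V
  | v, _, .nil => paE K V v
  | _, _, .cons p a => paPath p * paArrow K V a

/-- The `N`-th power `R^N` of the arrow ideal `R` of the path algebra: the two-sided
ideal spanned by (the classes of) all paths of length at least `N`. -/
noncomputable def arrowIdealPow (N : ℕ) : TwoSidedIdeal (PathAlg K V) :=
  TwoSidedIdeal.span {x | ∃ (v w : V) (p : Path v w), N ≤ p.length ∧ x = paPath K V p}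

/-- An ideal `I` of the path algebra is admissible if `R^N ⊆ I ⊆ R^2` for some `N ≥ 2`. -/
def IsAdmissible (I : TwoSidedIdeal (PathAlg K V)) : Prop :=
  ∃ N : ℕ, 2 ≤ N ∧ arrowIdealPow K V N ≤ I ∧ I ≤ arrowIdealPow K V 2

variable (I : TwoSidedIdeal (PathAlg K V))

/-- The quiver algebra `A = KQ/I` (the quotient of the path algebra by the two-sided
ideal `I`). -/
def QuotAlg : Type u := RingQuot (fun x y : PathAlg K V => x - y ∈ I)

noncomputable instance : Ring (QuotAlg K V I) :=
  inferInstanceAs (Ring (RingQuot (fun x y : PathAlg K V => x - y ∈ I)))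

noncomputable instance : Algebra K (QuotAlg K V I) :=
  inferInstanceAs (Algebra K (RingQuot (fun x y : PathAlg K V => x - y ∈ I)))

/-- The quotient map `KQ → A = KQ/I`. -/
noncomputable def quotMk : PathAlg K V →ₐ[K] QuotAlg K V I :=
  RingQuot.mkAlgHom K _

/-- The trivial path `e v` as an element of `A = KQ/I`. -/
noncomputable def eA (v : V) : QuotAlg K V I := quotMk K V I (paE K V v)

/-- An arrow as an element of `A = KQ/I`. -/
noncomputable def arrA {v w : V} (a : v ⟶ w) : QuotAlg K V I := quotMk K V I (paArrow K V a)

/-- `cycProd K V I v a i k` is the product `a_i a_{i+1} ⋯ a_{i+k-1}` in `A = KQ/I` of `k`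
consecutive arrows of the oriented cycle `a`, starting at position `i`
(for `k = 0` it is the trivial path at the vertex `v i`). -/
noncomputable def cycProd {l : ℕ} (v : ZMod l → V) (a : ∀ i : ZMod l, v i ⟶ v (i + 1)) :
    ZMod l → ℕ → QuotAlg K V I
  | i, 0 => eA K V I (v i)
  | i, k + 1 => arrA K V I (a i) * cycProd v a (i + 1) k

/-- `a` is an oriented cycle of length `l ≥ 1` (through the vertices `v i`) which is
`m`-truncated in `A = KQ/I`: every product of `m` consecutive arrows of the cycle
vanishes in `A`, while no product of `m - 1` consecutive arrows does. -/
def IsMTruncatedCycle (m : ℕ) {l : ℕ} (v : ZMod l → V) (a : ∀ i : ZMod l, v i ⟶ v (i + 1)) :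
    Prop :=
  0 < l ∧ ∀ i : ZMod l, cycProd K V I v a i m = 0 ∧ cycProd K V I v a i (m - 1) ≠ 0

/-- `a` is an oriented cycle of length `l ≥ 1` which is `2`-truncated in `A = KQ/I`:
`a_i a_{i+1} = 0` in `A` for all `i`. -/
def IsTwoTruncatedCycle {l : ℕ} (v : ZMod l → V) (a : ∀ i : ZMod l, v i ⟶ v (i + 1)) : Prop :=
  0 < l ∧ ∀ i : ZMod l, arrA K V I (a i) * arrA K V I (a (i + 1)) = 0

end PathAlgebra


open scoped TensorProduct
open PiTensorProduct

section GenericTensor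

variable (K : Type u) [Field K]
variable (M : Type u) [AddCommGroup M] [Module K M]

/-- `M^{⊗2} ≅ M ⊗ M`. -/
noncomputable def finTwoTensorEquivM : (⨂[K] (_ : Fin 2), M) ≃ₗ[K] M ⊗[K] M :=
  (reindex K (fun _ : Fin 2 => M) (finSumFinEquiv (m := 1) (n := 1)).symm) ≪≫ₗ
    (tmulEquiv K M).symm ≪≫ₗ
      TensorProduct.congr (subsingletonEquiv (0 : Fin 1)) (subsingletonEquiv (0 : Fin 1))

/-- Given a multiplication `mul : M ⊗ M → M`, the 0-th face map
`M^{⊗(n+2)} → M^{⊗(n+1)}` multiplying the first two tensor factors. -/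
noncomputable def gd0 (mul : M ⊗[K] M →ₗ[K] M) (n : ℕ) :
    (⨂[K] (_ : Fin (n + 2)), M) →ₗ[K] ⨂[K] (_ : Fin (n + 1)), M :=
  ((reindex K (fun _ : Fin 1 ⊕ Fin n => M)
        (finSumFinEquiv.trans (finCongr (by omega)))).toLinearMap ∘ₗ
      (tmulEquiv K M).toLinearMap ∘ₗ
        (TensorProduct.map
          ((subsingletonEquiv (0 : Fin 1)).symm.toLinearMap ∘ₗ
            mul ∘ₗ (finTwoTensorEquivM K M).toLinearMap)
          LinearMap.id) ∘ₗ
          (tmulEquiv K M).symm.toLinearMap ∘ₗ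
            (reindex K (fun _ : Fin (n + 2) => M)
              ((finCongr (by omega)).trans (finSumFinEquiv (m := 2) (n := n)).symm)).toLinearMap)

/-- Rotation of tensor factors: `(grot m i) (x_0 ⊗ ⋯ ⊗ x_m)` has `x_{j+i}` in slot `j`. -/
noncomputable def grot (m : ℕ) (i : Fin (m + 1)) :
    (⨂[K] (_ : Fin (m + 1)), M) ≃ₗ[K] ⨂[K] (_ : Fin (m + 1)), M :=
  reindex K (fun _ : Fin (m + 1) => M) (Equiv.addRight i).symm

/-- The `j`-th face map `M^{⊗(k+2)} → M^{⊗(k+1)}` (for `j ≤ k`, so no wrap-around):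
multiply the adjacent tensor factors in slots `j` and `j+1`. -/
noncomputable def gface (mul : M ⊗[K] M →ₗ[K] M) (k : ℕ) (j : Fin (k + 1)) :
    (⨂[K] (_ : Fin (k + 2)), M) →ₗ[K] ⨂[K] (_ : Fin (k + 1)), M :=
  (grot K M k (-j)).toLinearMap ∘ₗ gd0 K M mul k ∘ₗ (grot K M (k + 1) j.castSucc).toLinearMap

/-- `M^{⊗(k+1)} ≅ M ⊗ M^{⊗k}` (splitting off the first factor). -/
noncomputable def splitFirst (k : ℕ) :
    (⨂[K] (_ : Fin (k + 1)), M) ≃ₗ[K] M ⊗[K] (⨂[K] (_ : Fin k), M) :=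
  (reindex K (fun _ : Fin (k + 1) => M)
      ((finCongr (by omega)).trans (finSumFinEquiv (m := 1) (n := k)).symm)) ≪≫ₗ
    (tmulEquiv K M).symm ≪≫ₗ
      TensorProduct.congr (subsingletonEquiv (0 : Fin 1)) (LinearEquiv.refl K _)

/-- `M^{⊗(k+1)} ≅ M^{⊗k} ⊗ M` (splitting off the last factor). -/
noncomputable def splitLast (k : ℕ) :
    (⨂[K] (_ : Fin (k + 1)), M) ≃ₗ[K] (⨂[K] (_ : Fin k), M) ⊗[K] M :=
  (reindex K (fun _ : Fin (k + 1) => M)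
      (finSumFinEquiv (m := k) (n := 1)).symm) ≪≫ₗ
    (tmulEquiv K M).symm ≪≫ₗ
      TensorProduct.congr (LinearEquiv.refl K _) (subsingletonEquiv (0 : Fin 1))

end GenericTensor

section Normalized

open Quiver

variable (K : Type u) [Field K]
variable (V : Type u) [Quiver.{u} V] [Fintype V]
variable (I : TwoSidedIdeal (PathAlg K V))

lemma paE_mul_paArrow {v w : V} (a : v ⟶ w) :
    paE K V v * paArrow K V a = paArrow K V a := by
  have h := RingQuot.mkAlgHom_rel K (PathAlgRel.left (K := K) (V := V) a)
  simpa [paE, paArrow, _root_.map_mul] using h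

/-- The arrow ideal `J = R/I` of `A = KQ/I`, as a `K`-submodule of `A`:
the image of the arrow ideal `R` of `KQ` under the quotient map. -/
noncomputable def normJ : Submodule K (QuotAlg K V I) :=
  Submodule.span K (quotMk K V I '' (arrowIdealPow K V 1 : Set (PathAlg K V)))

lemma arrA_mem_normJ {v w : V} (a : v ⟶ w) : arrA K V I a ∈ normJ K V I := by
  refine Submodule.subset_span ⟨paArrow K V a, ?_, rfl⟩
  refine TwoSidedIdeal.subset_span ⟨v, w, Quiver.Path.nil.cons a, by simp, ?_⟩
  have h : paPath K V (Quiver.Path.nil.cons a) = paE K V v * paArrow K V a := by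
    simp [paPath]
  rw [h, paE_mul_paArrow]

lemma normJ_mul_mem {x y : QuotAlg K V I} (hx : x ∈ normJ K V I) (hy : y ∈ normJ K V I) :
    x * y ∈ normJ K V I := by
  induction hx using Submodule.span_induction with
  | mem x hx =>
    induction hy using Submodule.span_induction with
    | mem y hy =>
      obtain ⟨u, hu, rfl⟩ := hx
      obtain ⟨w, hw, rfl⟩ := hy
      refine Submodule.subset_span ⟨u * w, ?_, _root_.map_mul _ _ _⟩
      exact TwoSidedIdeal.mul_mem_right _ _ _ hu
    | zero => simpa using (normJ K V I).zero_mem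
    | add y z _ _ hy hz => simpa [mul_add] using (normJ K V I).add_mem hy hz
    | smul c y _ hy => simpa [mul_smul_comm] using (normJ K V I).smul_mem c hy
  | zero => simpa using (normJ K V I).zero_mem
  | add x z _ _ hx hz => simpa [add_mul] using (normJ K V I).add_mem hx hz
  | smul c x _ hx => simpa [smul_mul_assoc] using (normJ K V I).smul_mem c hx

/-- Multiplication `J ⊗ J → J`. -/
noncomputable def mulJ : (normJ K V I) ⊗[K] (normJ K V I) →ₗ[K] normJ K V I :=
  TensorProduct.lift
    { toFun := fun x =>
        { toFun := fun y => ⟨(x : QuotAlg K V I) * y, normJ_mul_mem K V I x.2 y.2⟩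
          map_add' := fun y z => by ext; simp [mul_add]
          map_smul' := fun c y => by ext; simp [mul_smul_comm] }
      map_add' := fun x z => by ext y; simp [add_mul]
      map_smul' := fun c x => by ext y; simp [smul_mul_assoc] }

/-- The (lift of the) `m`-th term `A ⊗ J^{⊗m}` of the `S`-normalized Hochschild complex
`C̄_S(A)_m = A ⊗_{Sᵉ} J^{⊗_S m}`, before dividing by the `S`-balancing relations. -/
noncomputable def NTC (m : ℕ) : Type u :=
  (QuotAlg K V I) ⊗[K] (⨂[K] (_ : Fin m), (normJ K V I))

noncomputable instance (m : ℕ) : AddCommGroup (NTC K V I m) :=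
  inferInstanceAs (AddCommGroup ((QuotAlg K V I) ⊗[K] (⨂[K] (_ : Fin m), (normJ K V I))))

noncomputable instance (m : ℕ) : Module K (NTC K V I m) :=
  inferInstanceAs (Module K ((QuotAlg K V I) ⊗[K] (⨂[K] (_ : Fin m), (normJ K V I))))

/-- Build an element of `NTC` from an element of `A` and a tensor of elements of `J`. -/
noncomputable def NTC.mk (m : ℕ) (α : QuotAlg K V I) (x : ⨂[K] (_ : Fin m), normJ K V I) :
    NTC K V I m :=
  α ⊗ₜ[K] x

/-- Reinterpret `NTC` as the tensor product it is. -/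
noncomputable def NTC.equiv (m : ℕ) :
    NTC K V I m ≃ₗ[K] (QuotAlg K V I) ⊗[K] (⨂[K] (_ : Fin m), (normJ K V I)) :=
  LinearEquiv.refl K _

/-- Multiplication `A ⊗ J → A`. -/
noncomputable def mulAJ : (QuotAlg K V I) ⊗[K] (normJ K V I) →ₗ[K] QuotAlg K V I :=
  (LinearMap.mul' K (QuotAlg K V I)) ∘ₗ (LinearMap.lTensor _ (normJ K V I).subtype)

/-- Multiplication `J ⊗ A → A`. -/
noncomputable def mulJA : (normJ K V I) ⊗[K] (QuotAlg K V I) →ₗ[K] QuotAlg K V I :=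
  (LinearMap.mul' K (QuotAlg K V I)) ∘ₗ (LinearMap.rTensor _ (normJ K V I).subtype)

/-- The `0`-th face of the normalized Hochschild boundary:
`x_0 ⊗ (x_1, …, x_{k+1}) ↦ (x_0 x_1) ⊗ (x_2, …, x_{k+1})`. -/
noncomputable def nTerm0 (k : ℕ) : NTC K V I (k + 1) →ₗ[K] NTC K V I k :=
  (LinearMap.rTensor _ (mulAJ K V I)) ∘ₗ
    (TensorProduct.assoc K _ _ _).symm.toLinearMap ∘ₗ
      (LinearMap.lTensor _ (splitFirst K (normJ K V I) k).toLinearMap)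

/-- The last (cyclic) face of the normalized Hochschild boundary:
`x_0 ⊗ (x_1, …, x_{k+1}) ↦ (x_{k+1} x_0) ⊗ (x_1, …, x_k)`. -/
noncomputable def nTermLast (k : ℕ) : NTC K V I (k + 1) →ₗ[K] NTC K V I k :=
  (LinearMap.rTensor _
      ((mulJA K V I) ∘ₗ (TensorProduct.comm K _ _).toLinearMap)) ∘ₗ
    (TensorProduct.assoc K _ _ _).symm.toLinearMap ∘ₗ
      (LinearMap.lTensor _
        ((TensorProduct.comm K _ _).toLinearMap ∘ₗ (splitLast K (normJ K V I) k).toLinearMap))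

/-- A middle face of the normalized Hochschild boundary: multiply the `J`-slots `j`
and `j+1`. -/
noncomputable def nTermMid (k : ℕ) (j : Fin (k + 1)) :
    NTC K V I (k + 2) →ₗ[K] NTC K V I (k + 1) :=
  LinearMap.lTensor (QuotAlg K V I) (gface K (normJ K V I) (mulJ K V I) k j)

/-- The (lift of the) Hochschild boundary `b` of the `S`-normalized complex:
`b(x_0, x_1, …, x_m) = Σ_{i=0}^{m-1} (-1)^i (x_0, …, x_i x_{i+1}, …, x_m)
 + (-1)^m (x_m x_0, x_1, …, x_{m-1})` (and `b = 0` out of degree `0`). -/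
noncomputable def NB : ∀ m : ℕ, NTC K V I m →ₗ[K] NTC K V I (m - 1)
  | 0 => 0
  | 1 => nTerm0 K V I 0 - nTermLast K V I 0
  | (k + 2) =>
      nTerm0 K V I (k + 1) +
        (∑ j : Fin (k + 1),
          ((-1 : K) ^ ((j : ℕ) + 1)) • nTermMid K V I k j) +
          ((-1 : K) ^ (k + 2)) • nTermLast K V I (k + 1)

/-- The submodule of `S^e`-balancing relations in `A ⊗ J^{⊗m}`: dividing by them yields
`C̄_S(A)_m = A ⊗_{Sᵉ} (J^{⊗_S m})`.  Relations (for all vertices `w`, i.e. for a spanning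
set of `S`): `(α e_w) ⊗ (x_0, …) ≡ α ⊗ (e_w x_0, …)`,
`α ⊗ (…, x_i e_w, x_{i+1}, …) ≡ α ⊗ (…, x_i, e_w x_{i+1}, …)`,
`α ⊗ (…, x_{m-1} e_w) ≡ (e_w α) ⊗ (…)`, and in degree `0`: `α e_w ≡ e_w α`. -/
noncomputable def relSub (m : ℕ) : Submodule K (NTC K V I m) :=
  Submodule.span K
    ({z | ∃ (hm : 0 < m) (w : V) (α : QuotAlg K V I) (x : Fin m → normJ K V I)
        (y : normJ K V I),
        (y : QuotAlg K V I) = eA K V I w * ((x ⟨0, hm⟩ : QuotAlg K V I)) ∧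
        z = NTC.mk K V I m (α * eA K V I w) (tprod K x) -
          NTC.mk K V I m α (tprod K (Function.update x ⟨0, hm⟩ y))} ∪
     {z | ∃ (i : ℕ) (hi : i + 1 < m) (w : V) (α : QuotAlg K V I)
        (x : Fin m → normJ K V I) (y y' : normJ K V I),
        (y : QuotAlg K V I) = ((x ⟨i, Nat.lt_of_succ_lt hi⟩ : QuotAlg K V I)) * eA K V I w ∧
        (y' : QuotAlg K V I) = eA K V I w * ((x ⟨i + 1, hi⟩ : QuotAlg K V I)) ∧
        z = NTC.mk K V I m α (tprod K (Function.update x ⟨i, Nat.lt_of_succ_lt hi⟩ y)) -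
          NTC.mk K V I m α (tprod K (Function.update x ⟨i + 1, hi⟩ y'))} ∪
     {z | ∃ (hm : 0 < m) (w : V) (α : QuotAlg K V I) (x : Fin m → normJ K V I)
        (y : normJ K V I),
        (y : QuotAlg K V I) = ((x ⟨m - 1, Nat.sub_lt hm Nat.one_pos⟩ : QuotAlg K V I)) *
          eA K V I w ∧
        z = NTC.mk K V I m α (tprod K (Function.update x ⟨m - 1, Nat.sub_lt hm Nat.one_pos⟩ y)) -
          NTC.mk K V I m (eA K V I w * α) (tprod K x)} ∪
     {z | m = 0 ∧ ∃ (w : V) (α : QuotAlg K V I) (x : Fin m → normJ K V I),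
        z = NTC.mk K V I m (α * eA K V I w) (tprod K x) -
          NTC.mk K V I m (eA K V I w * α) (tprod K x)})

/-- The `m`-th term `C̄_S(A)_m = A ⊗_{Sᵉ} (J^{⊗_S m})` of the `S`-normalized Hochschild
complex of `A = KQ/I`. -/
noncomputable def NormChain (m : ℕ) : Type u := NTC K V I m ⧸ relSub K V I m

/-- The `n`-th homology of the `S`-normalized Hochschild complex (which computes the
Hochschild homology `HH_n(A)`): the quotient of the cycles (elements whose boundary lies
in the balancing relations) by the boundaries together with the balancing relations. -/
noncomputable def NormHH (n : ℕ) : Type u :=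
  LinearMap.ker ((relSub K V I (n - 1)).mkQ ∘ₗ NB K V I n) ⧸
    Submodule.comap (LinearMap.ker ((relSub K V I (n - 1)).mkQ ∘ₗ NB K V I n)).subtype
      ((relSub K V I n) ⊔ LinearMap.range (NB K V I (n + 1)))

/-- The lift to `A ⊗ J^{⊗n}` of the element
`ξ = (a_{start}, a_{start+1}, …)` (the oriented cycle `a`, read from position `start`,
written out to fill `n + 1` tensor slots) of `C̄_S(A)_n`. -/
noncomputable def xiLift {l : ℕ} (v : ZMod l → V) (a : ∀ i : ZMod l, v i ⟶ v (i + 1))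
    (n : ℕ) (start : ZMod l) : NTC K V I n :=
  NTC.mk K V I n (arrA K V I (a start))
    (tprod K (fun i : Fin n =>
      (⟨arrA K V I (a (start + 1 + ((i : ℕ) : ZMod l))),
        arrA_mem_normJ K V I _⟩ : normJ K V I)))


end Normalized

section Stmt12Proof

open Classical

variable (K : Type u) [Field K] (V : Type u) [Quiver.{u} V]

/-- Basis-index type for the truncated algebra `S ⊕ J/J²`. -/
abbrev BIdx : Type u := V ⊕ Σ v : V, Σ w : V, v ⟶ w

/-- Left multiplication by the trivial path `e w` on the truncated regular module. -/
noncomputable def gE (w : V) : Module.End K (BIdx V →₀ K) :=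
  Finsupp.linearCombination K fun b =>
    match b with
    | .inl u => if u = w then Finsupp.single (.inl u) (1 : K) else 0
    | .inr s => if s.1 = w then Finsupp.single (.inr s) (1 : K) else 0

/-- Left multiplication by an arrow on the truncated regular module. -/
noncomputable def gF {v w : V} (a : v ⟶ w) : Module.End K (BIdx V →₀ K) :=
  Finsupp.linearCombination K fun b =>
    match b with
    | .inl u => if u = w then Finsupp.single (.inr ⟨v, w, a⟩) (1 : K) else 0
    | .inr _ => 0

@[simp] lemma gE_single_inl (w u : V) (k : K) :
    gE K V w (Finsupp.single (.inl u) k) = if u = w then Finsupp.single (.inl u) k else 0 := by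
  rw [gE, Finsupp.linearCombination_single]
  split_ifs <;> simp_all [Finsupp.smul_single]

@[simp] lemma gE_single_inr (w : V) (s : Σ v : V, Σ w : V, v ⟶ w) (k : K) :
    gE K V w (Finsupp.single (.inr s) k) =
      if s.1 = w then Finsupp.single (.inr s) k else 0 := by
  rw [gE, Finsupp.linearCombination_single]
  split_ifs <;> simp_all [Finsupp.smul_single]

@[simp] lemma gF_single_inl {v w : V} (a : v ⟶ w) (u : V) (k : K) :
    gF K V a (Finsupp.single (.inl u) k) =
      if u = w then Finsupp.single (.inr ⟨v, w, a⟩) k else 0 := by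
  rw [gF, Finsupp.linearCombination_single]
  split_ifs <;> simp_all [Finsupp.smul_single]

@[simp] lemma gF_single_inr {v w : V} (a : v ⟶ w) (s : Σ v : V, Σ w : V, v ⟶ w) (k : K) :
    gF K V a (Finsupp.single (.inr s) k) = 0 := by
  rw [gF, Finsupp.linearCombination_single]
  simp

lemma gE_gE (w : V) : gE K V w * gE K V w = gE K V w := by
  apply Finsupp.lhom_ext
  rintro (u | s) k <;> simp only [Module.End.mul_apply, gE_single_inl, gE_single_inr] <;>
    split_ifs <;> simp_all

lemma gE_gE_ne (v w : V) (h : v ≠ w) : gE K V v * gE K V w = 0 := by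
  apply Finsupp.lhom_ext
  rintro (u | s) k <;> simp only [Module.End.mul_apply, gE_single_inl, gE_single_inr] <;>
    split_ifs <;> simp_all <;> exact fun h2 => absurd h2.symm h

lemma sum_gE [Fintype V] : ∑ v : V, gE K V v = 1 := by
  apply Finsupp.lhom_ext
  rintro (u | s) k <;>
    simp [LinearMap.sum_apply, Finset.sum_ite_eq, Module.End.one_apply]

lemma gE_gF {v w : V} (a : v ⟶ w) : gE K V v * gF K V a = gF K V a := by
  apply Finsupp.lhom_ext
  rintro (u | s) k <;> simp only [Module.End.mul_apply, gF_single_inl, gF_single_inr] <;>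
    (try split_ifs) <;> simp_all

lemma gF_gE {v w : V} (a : v ⟶ w) : gF K V a * gE K V w = gF K V a := by
  apply Finsupp.lhom_ext
  rintro (u | s) k <;>
    simp only [Module.End.mul_apply, gE_single_inl, gE_single_inr, gF_single_inl,
      gF_single_inr] <;> (try split_ifs) <;> simp_all

lemma gF_gF {v w v' w' : V} (a : v ⟶ w) (b : v' ⟶ w') : gF K V a * gF K V b = 0 := by
  apply Finsupp.lhom_ext
  rintro (u | s) k <;>
    simp only [Module.End.mul_apply, gF_single_inl, gF_single_inr, LinearMap.zero_apply] <;>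
    (try split_ifs) <;> simp_all

variable [Fintype V]

/-- The truncated-regular representation of the free algebra. -/
noncomputable def theta0 : FreeAlgebra K (V ⊕ Σ v : V, Σ w : V, v ⟶ w) →ₐ[K]
    Module.End K (BIdx V →₀ K) :=
  FreeAlgebra.lift K fun b =>
    match b with
    | .inl v => gE K V v
    | .inr s => gF K V s.2.2

lemma theta0_rel : ∀ ⦃x y⦄, PathAlgRel K V x y → theta0 K V x = theta0 K V y := by
  intro x y h
  induction h with
  | idem v => simp [theta0, gE_gE]
  | orth v w h => simp [theta0, gE_gE_ne K V v w h]
  | sum_idem => simp [theta0, sum_gE]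
  | left a => simp [theta0, gE_gF]
  | right a => simp [theta0, gF_gE]

/-- The truncated-regular representation of the path algebra. -/
noncomputable def theta : PathAlg K V →ₐ[K] Module.End K (BIdx V →₀ K) :=
  RingQuot.liftAlgHom K ⟨theta0 K V, theta0_rel K V⟩

@[simp] lemma theta_paE (v : V) : theta K V (paE K V v) = gE K V v := by
  rw [theta, paE, RingQuot.liftAlgHom_mkAlgHom_apply]
  simp [theta0]

@[simp] lemma theta_paArrow {v w : V} (a : v ⟶ w) : theta K V (paArrow K V a) = gF K V a := by
  rw [theta, paArrow, RingQuot.liftAlgHom_mkAlgHom_apply]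
  simp [theta0]

lemma theta_paPath_len2 : ∀ {v w : V} (p : Path v w), 2 ≤ p.length →
    theta K V (paPath K V p) = 0 := by
  intro v w p hp
  match p with
  | .nil => simp [Quiver.Path.length] at hp
  | .cons .nil b => simp [Quiver.Path.length] at hp
  | .cons (.cons q c) b =>
      show theta K V (paPath K V ((q.cons c).cons b)) = 0
      have : paPath K V ((q.cons c).cons b) = paPath K V q * (paArrow K V c * paArrow K V b) := by
        simp [paPath, mul_assoc]
      rw [this, _root_.map_mul, _root_.map_mul, theta_paArrow, theta_paArrow, gF_gF, mul_zero]

variable (I : TwoSidedIdeal (PathAlg K V))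

lemma theta_vanish (hI2 : I ≤ arrowIdealPow K V 2) : ∀ x ∈ I, theta K V x = 0 := by
  intro x hx
  have hx2 : x ∈ arrowIdealPow K V 2 := hI2 hx
  have hker : x ∈ TwoSidedIdeal.ker (theta K V).toRingHom := by
    refine TwoSidedIdeal.mem_span_iff.mp hx2 _ ?_
    rintro y ⟨v, w, p, hp, rfl⟩
    rw [SetLike.mem_coe, TwoSidedIdeal.mem_ker]
    simpa using theta_paPath_len2 K V p hp
  have h2 := (TwoSidedIdeal.mem_ker (theta K V).toRingHom).mp hker
  simpa using h2

/-- The truncated-regular representation of `A = KQ/I`. -/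
noncomputable def thetaA (hI2 : I ≤ arrowIdealPow K V 2) :
    QuotAlg K V I →ₐ[K] Module.End K (BIdx V →₀ K) :=
  RingQuot.liftAlgHom K ⟨theta K V, fun x y h => by
    have h0 := theta_vanish K V I hI2 (x - y) h
    rwa [map_sub, sub_eq_zero] at h0⟩

lemma thetaA_quotMk (hI2 : I ≤ arrowIdealPow K V 2) (x : PathAlg K V) :
    thetaA K V I hI2 (quotMk K V I x) = theta K V x := by
  rw [thetaA, quotMk]
  exact RingQuot.liftAlgHom_mkAlgHom_apply K (theta K V) _ x

@[simp] lemma thetaA_arrA (hI2 : I ≤ arrowIdealPow K V 2) {v w : V} (a : v ⟶ w) :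
    thetaA K V I hI2 (arrA K V I a) = gF K V a := by
  rw [arrA, thetaA_quotMk, theta_paArrow]

@[simp] lemma thetaA_eA (hI2 : I ≤ arrowIdealPow K V 2) (v : V) :
    thetaA K V I hI2 (eA K V I v) = gE K V v := by
  rw [eA, thetaA_quotMk, theta_paE]

lemma gE_apply_inr (w : V) (m : BIdx V →₀ K) (s : Σ v : V, Σ w : V, v ⟶ w) :
    gE K V w m (.inr s) = if s.1 = w then m (.inr s) else 0 := by
  induction m using Finsupp.induction_linear with
  | zero => simp
  | add f g hf hg =>
      rw [map_add, Finsupp.add_apply, hf, hg, Finsupp.add_apply]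
      split_ifs <;> simp
  | single b k =>
      rcases b with u | t
      · rw [gE_single_inl]
        split_ifs <;> simp [Finsupp.single_apply]
      · rw [gE_single_inr]
        rcases eq_or_ne t s with rfl | h
        · split_ifs <;> simp
        · have h2 : (Sum.inr t : BIdx V) ≠ .inr s := by simpa using h
          split_ifs <;> simp [Finsupp.single_eq_of_ne h2.symm]

/-- The coefficient functional at the arrow `b` on `A = KQ/I`. -/
noncomputable def cf (hI2 : I ≤ arrowIdealPow K V 2) (b : Σ v : V, Σ w : V, v ⟶ w) :
    QuotAlg K V I →ₗ[K] K where
  toFun α := thetaA K V I hI2 α (Finsupp.single (.inl b.2.1) 1) (.inr b)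
  map_add' x y := by simp only [map_add, LinearMap.add_apply, Finsupp.add_apply]
  map_smul' c x := by
    simp only [map_smul, LinearMap.smul_apply, Finsupp.smul_apply, RingHom.id_apply,
      smul_eq_mul]

lemma cf_arrA (hI2 : I ≤ arrowIdealPow K V 2) {v' w' : V} (a' : v' ⟶ w')
    (b : Σ v : V, Σ w : V, v ⟶ w) :
    cf K V I hI2 b (arrA K V I a') =
      if (⟨v', w', a'⟩ : Σ v : V, Σ w : V, v ⟶ w) = b then 1 else 0 := by
  obtain ⟨bv, bw, ba⟩ := b
  show (thetaA K V I hI2 (arrA K V I a')) (Finsupp.single (.inl bw) 1) (.inr ⟨bv, bw, ba⟩) = _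
  rw [thetaA_arrA, gF_single_inl]
  by_cases h : (⟨v', w', a'⟩ : Σ v : V, Σ w : V, v ⟶ w) = ⟨bv, bw, ba⟩
  · have hw : w' = bw := congrArg (fun s => s.2.1) h
    simp [hw, h, Finsupp.single_apply]
  · by_cases hw : w' = bw
    · rw [if_pos hw.symm, if_neg h, Finsupp.single_eq_of_ne (Ne.symm (by simpa using h))]
    · rw [if_neg (Ne.symm hw), if_neg h, Finsupp.coe_zero, Pi.zero_apply]

lemma cf_mul_eA (hI2 : I ≤ arrowIdealPow K V 2) (b : Σ v : V, Σ w : V, v ⟶ w)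
    (α : QuotAlg K V I) (w : V) :
    cf K V I hI2 b (α * eA K V I w) = if b.2.1 = w then cf K V I hI2 b α else 0 := by
  show (thetaA K V I hI2 (α * eA K V I w)) (Finsupp.single (.inl b.2.1) 1) (.inr b) = _
  rw [_root_.map_mul, Module.End.mul_apply, thetaA_eA, gE_single_inl]
  split_ifs with h
  · rfl
  · simp

lemma cf_eA_mul (hI2 : I ≤ arrowIdealPow K V 2) (b : Σ v : V, Σ w : V, v ⟶ w)
    (α : QuotAlg K V I) (w : V) :
    cf K V I hI2 b (eA K V I w * α) = if b.1 = w then cf K V I hI2 b α else 0 := by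
  show (thetaA K V I hI2 (eA K V I w * α)) (Finsupp.single (.inl b.2.1) 1) (.inr b) = _
  rw [_root_.map_mul, Module.End.mul_apply, thetaA_eA, gE_apply_inr]
  split_ifs <;> rfl

end Stmt12Proof

section Stmt12Cycle

open Classical

variable (K : Type u) [Field K] (V : Type u) [Quiver.{u} V]

/-- The "slot datum" (source, target, arrow) at position `i` of an oriented cycle. -/
def bslot {l : ℕ} (v : ZMod l → V) (a : ∀ i : ZMod l, v i ⟶ v (i + 1)) (i : ZMod l) :
    Σ v : V, Σ w : V, v ⟶ w := ⟨v i, v (i + 1), a i⟩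

variable [Fintype V] (I : TwoSidedIdeal (PathAlg K V))

lemma arrA_congr_bslot {l : ℕ} (v : ZMod l → V) (a : ∀ i : ZMod l, v i ⟶ v (i + 1))
    {x y : ZMod l} (h : bslot V v a x = bslot V v a y) :
    arrA K V I (a x) = arrA K V I (a y) := by
  have h2 := congrArg (fun s : Σ v : V, Σ w : V, v ⟶ w => arrA K V I s.2.2) h
  simpa [bslot] using h2

/-- The product of coefficient functionals along (a rotation of) the cycle, on `J^{⊗n}`. -/
noncomputable def psiF (hI2 : I ≤ arrowIdealPow K V 2) {l : ℕ} (v : ZMod l → V)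
    (a : ∀ i : ZMod l, v i ⟶ v (i + 1)) (n : ℕ) (k : ZMod l) :
    (⨂[K] (_ : Fin n), (normJ K V I)) →ₗ[K] K :=
  PiTensorProduct.lift ((MultilinearMap.mkPiAlgebra K (Fin n) K).compLinearMap
    (fun o => (cf K V I hI2 (bslot V v a (k + 1 + ((o : ℕ) : ZMod l)))) ∘ₗ
      (normJ K V I).subtype))

/-- The full separating functional on `A ⊗ J^{⊗n}` attached to the rotation starting at `k`. -/
noncomputable def PhiF (hI2 : I ≤ arrowIdealPow K V 2) {l : ℕ} (v : ZMod l → V)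
    (a : ∀ i : ZMod l, v i ⟶ v (i + 1)) (n : ℕ) (k : ZMod l) :
    NTC K V I n →ₗ[K] K :=
  TensorProduct.lift (((LinearMap.mul K K).comp (cf K V I hI2 (bslot V v a k))).compl₂
    (psiF K V I hI2 v a n k))

lemma PhiF_mk (hI2 : I ≤ arrowIdealPow K V 2) {l : ℕ} (v : ZMod l → V)
    (a : ∀ i : ZMod l, v i ⟶ v (i + 1)) (n : ℕ) (k : ZMod l)
    (α : QuotAlg K V I) (x : Fin n → normJ K V I) :
    PhiF K V I hI2 v a n k (NTC.mk K V I n α (tprod K x)) =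
      cf K V I hI2 (bslot V v a k) α *
        ∏ o : Fin n, cf K V I hI2 (bslot V v a (k + 1 + ((o : ℕ) : ZMod l)))
          (x o : QuotAlg K V I) := by
  rw [PhiF, NTC.mk]
  erw [TensorProduct.lift.tmul]
  simp only [LinearMap.compl₂_apply, LinearMap.coe_comp, Function.comp_apply,
    LinearMap.mul_apply', psiF, PiTensorProduct.lift.tprod,
    MultilinearMap.compLinearMap_apply, MultilinearMap.mkPiAlgebra_apply,
    Submodule.coe_subtype]

lemma prod_apply_update {n : ℕ} {β : Type*} (g : Fin n → β → K) (x : Fin n → β)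
    (i : Fin n) (y : β) :
    ∏ o : Fin n, g o (Function.update x i y o) =
      g i y * ∏ o ∈ Finset.univ.erase i, g o (x o) := by
  have h : (fun o => g o (Function.update x i y o)) =
      Function.update (fun o => g o (x o)) i (g i y) := by
    funext o
    rcases eq_or_ne o i with rfl | h
    · simp
    · simp [Function.update_of_ne h]
  rw [h]
  rw [Finset.prod_update_of_mem (Finset.mem_univ i), Finset.sdiff_singleton_eq_erase]

lemma prod_update_scale {n : ℕ} {β : Type u} (g : Fin n → β → K) (x : Fin n → β)
    (i : Fin n) (y : β) (c : K) (h : g i y = c * g i (x i)) :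
    ∏ o : Fin n, g o (Function.update x i y o) = c * ∏ o : Fin n, g o (x o) := by
  rw [prod_apply_update, h, mul_assoc]
  congr 1
  exact Finset.mul_prod_erase Finset.univ (fun o => g o (x o)) (Finset.mem_univ i)

lemma cf_prod_update (hI2 : I ≤ arrowIdealPow K V 2) {l : ℕ} (v : ZMod l → V)
    (a : ∀ i : ZMod l, v i ⟶ v (i + 1)) (n : ℕ) (k : ZMod l)
    (x : Fin n → normJ K V I) (i : Fin n) (y : normJ K V I) (c : K)
    (h : cf K V I hI2 (bslot V v a (k + 1 + ((i : ℕ) : ZMod l))) (y : QuotAlg K V I)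
      = c * cf K V I hI2 (bslot V v a (k + 1 + ((i : ℕ) : ZMod l))) (x i : QuotAlg K V I)) :
    ∏ o : Fin n, cf K V I hI2 (bslot V v a (k + 1 + ((o : ℕ) : ZMod l)))
        ((Function.update x i y o : normJ K V I) : QuotAlg K V I)
      = c * ∏ o : Fin n, cf K V I hI2 (bslot V v a (k + 1 + ((o : ℕ) : ZMod l)))
        (x o : QuotAlg K V I) :=
  prod_update_scale K (fun (o : Fin n) (z : normJ K V I) =>
    cf K V I hI2 (bslot V v a (k + 1 + ((o : ℕ) : ZMod l))) (z : QuotAlg K V I)) x i y c h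

lemma zmod_wrap {l n : ℕ} (hn : ((n + 1 : ℕ) : ZMod l) = 0) (hm : 0 < n) (k : ZMod l) :
    k + 1 + ((n - 1 : ℕ) : ZMod l) + 1 = k := by
  have h1 : (n - 1) + 2 = n + 1 := by omega
  have h2 : ((n - 1 : ℕ) : ZMod l) + 2 = 0 := by
    rw [show ((2 : ZMod l)) = ((2 : ℕ) : ZMod l) by push_cast; ring, ← Nat.cast_add, h1, hn]
  calc k + 1 + ((n - 1 : ℕ) : ZMod l) + 1 = k + (((n - 1 : ℕ) : ZMod l) + 2) := by ring
    _ = k := by rw [h2, add_zero]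

lemma PhiF_relSub (hI2 : I ≤ arrowIdealPow K V 2) {l : ℕ} (v : ZMod l → V)
    (a : ∀ i : ZMod l, v i ⟶ v (i + 1)) (n : ℕ) (k : ZMod l)
    (hn : ((n + 1 : ℕ) : ZMod l) = 0) :
    relSub K V I n ≤ LinearMap.ker (PhiF K V I hI2 v a n k) := by
  rw [relSub, Submodule.span_le]
  rintro z (((⟨hm, w, α, x, y, hy, rfl⟩ | ⟨i, hi, w, α, x, y, y', hy, hy', rfl⟩) |
    ⟨hm, w, α, x, y, hy, rfl⟩) | ⟨hm0, w, α, x, rfl⟩)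
  · -- balancing at slot 0 against the A-factor
    simp only [SetLike.mem_coe, LinearMap.mem_ker, map_sub, PhiF_mk]
    rw [cf_prod_update K V I hI2 v a n k x ⟨0, hm⟩ y (if v (k + 1) = w then 1 else 0) ?_,
      cf_mul_eA]
    · have hb : (bslot V v a k).2.1 = v (k + 1) := rfl
      rw [hb]
      split_ifs <;> ring
    · rw [hy, cf_eA_mul]
      have hb : (bslot V v a (k + 1 + (((⟨0, hm⟩ : Fin n) : ℕ) : ZMod l))).1 = v (k + 1) := by
        simp [bslot]
      rw [hb]
      split_ifs <;> ring
  · -- balancing between two adjacent J-slots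
    simp only [SetLike.mem_coe, LinearMap.mem_ker, map_sub, PhiF_mk]
    have hidx : (k + 1 + (((i + 1 : ℕ)) : ZMod l)) = k + 1 + ((i : ℕ) : ZMod l) + 1 := by
      push_cast; ring
    rw [cf_prod_update K V I hI2 v a n k x ⟨i, Nat.lt_of_succ_lt hi⟩ y
        (if v (k + 1 + ((i : ℕ) : ZMod l) + 1) = w then 1 else 0) ?_,
      cf_prod_update K V I hI2 v a n k x ⟨i + 1, hi⟩ y'
        (if v (k + 1 + ((i : ℕ) : ZMod l) + 1) = w then 1 else 0) ?_]
    · ring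
    · show cf K V I hI2 (bslot V v a (k + 1 + (((i + 1 : ℕ)) : ZMod l))) (y' : QuotAlg K V I)
        = _ * cf K V I hI2 (bslot V v a (k + 1 + (((i + 1 : ℕ)) : ZMod l)))
          ((x ⟨i + 1, hi⟩ : normJ K V I) : QuotAlg K V I)
      rw [hy', cf_eA_mul]
      have hb : (bslot V v a (k + 1 + (((i + 1 : ℕ)) : ZMod l))).1
          = v (k + 1 + ((i : ℕ) : ZMod l) + 1) := by
        rw [bslot, hidx]
      rw [hb]
      split_ifs <;> ring
    · show cf K V I hI2 (bslot V v a (k + 1 + ((i : ℕ) : ZMod l))) (y : QuotAlg K V I)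
        = _ * cf K V I hI2 (bslot V v a (k + 1 + ((i : ℕ) : ZMod l)))
          ((x ⟨i, Nat.lt_of_succ_lt hi⟩ : normJ K V I) : QuotAlg K V I)
      rw [hy, cf_mul_eA]
      have hb : (bslot V v a (k + 1 + ((i : ℕ) : ZMod l))).2.1
          = v (k + 1 + ((i : ℕ) : ZMod l) + 1) := rfl
      rw [hb]
      split_ifs <;> ring
  · -- balancing at the last slot against the A-factor
    simp only [SetLike.mem_coe, LinearMap.mem_ker, map_sub, PhiF_mk]
    rw [cf_prod_update K V I hI2 v a n k x ⟨n - 1, Nat.sub_lt hm Nat.one_pos⟩ y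
        (if v k = w then 1 else 0) ?_,
      cf_eA_mul]
    · have hb : (bslot V v a k).1 = v k := rfl
      rw [hb]
      split_ifs <;> ring
    · rw [hy, cf_mul_eA]
      have hb : (bslot V v a (k + 1 +
          (((⟨n - 1, Nat.sub_lt hm Nat.one_pos⟩ : Fin n) : ℕ) : ZMod l))).2.1 = v k := by
        show v (k + 1 + ((n - 1 : ℕ) : ZMod l) + 1) = v k
        rw [zmod_wrap hn hm]
      rw [hb]
      split_ifs <;> ring
  · -- degree 0
    simp only [SetLike.mem_coe, LinearMap.mem_ker, map_sub, PhiF_mk]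
    rw [cf_mul_eA, cf_eA_mul]
    have hk : k + 1 = k := by
      have h1 : ((1 : ZMod l)) = 0 := by
        have := hn
        rw [hm0] at this
        simpa using this
      rw [h1, add_zero]
    have hb : (bslot V v a k).2.1 = v k := by
      show v (k + 1) = v k
      rw [hk]
    have hb2 : (bslot V v a k).1 = v k := rfl
    rw [hb, hb2]
    split_ifs <;> ring

lemma PhiF_xi (hI2 : I ≤ arrowIdealPow K V 2) {l : ℕ} (v : ZMod l → V)
    (a : ∀ i : ZMod l, v i ⟶ v (i + 1)) (n : ℕ) (k j : ZMod l) :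
    PhiF K V I hI2 v a n k (xiLift K V I v a n j) =
      if (bslot V v a j = bslot V v a k ∧ ∀ o : Fin n,
          bslot V v a (j + 1 + ((o : ℕ) : ZMod l)) = bslot V v a (k + 1 + ((o : ℕ) : ZMod l)))
        then 1 else 0 := by
  have hfac : ∀ z y : ZMod l, cf K V I hI2 (bslot V v a y) (arrA K V I (a z))
      = if bslot V v a z = bslot V v a y then 1 else 0 := fun z y =>
    cf_arrA K V I hI2 (a z) (bslot V v a y)
  rw [xiLift, PhiF_mk]
  dsimp only
  simp only [hfac, Finset.prod_boole, Finset.mem_univ, forall_true_left]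
  split_ifs <;> simp_all

/-- Casting an arrow along an equality of its target. -/
def homCast {v1 w1 w2 : V} (e : w1 = w2) (h : v1 ⟶ w1) : v1 ⟶ w2 := e ▸ h

lemma arrA_homCast {v1 w1 w2 : V} (e : w1 = w2) (h : v1 ⟶ w1) :
    arrA K V I (homCast V e h) = arrA K V I h := by
  subst e; rfl

lemma shorter_cycle {l : ℕ} [NeZero l] (v : ZMod l → V)
    (a : ∀ i : ZMod l, v i ⟶ v (i + 1))
    (ha : IsTwoTruncatedCycle K V I v a) (d : ZMod l) (hd : d ≠ 0)
    (hper : ∀ i : ZMod l, bslot V v a (i + d) = bslot V v a i) :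
    ∃ (l' : ℕ) (v' : ZMod l' → V) (a' : ∀ i : ZMod l', v' i ⟶ v' (i + 1)),
      IsTwoTruncatedCycle K V I v' a' ∧ l' < l := by
  set p := d.val with hp_def
  have hp0 : 0 < p := Nat.pos_of_ne_zero (fun h => hd ((ZMod.val_eq_zero d).mp h))
  haveI : NeZero p := ⟨hp0.ne'⟩
  have hpl : p < l := ZMod.val_lt d
  have hdl : ((p : ℕ) : ZMod l) = d := by
    rw [hp_def, ZMod.natCast_val, ZMod.cast_id]
  set f : ZMod p → ZMod l := fun i => ((i.val : ℕ) : ZMod l) with hf_def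
  have hbs : ∀ i : ZMod p, bslot V v a (f (i + 1)) = bslot V v a (f i + 1) := by
    intro i
    have hvadd : (i + 1 : ZMod p).val = (i.val + 1) % p := by
      have h1 : (i + 1 : ZMod p) = ((i.val + 1 : ℕ) : ZMod p) := by
        push_cast [ZMod.natCast_val, ZMod.cast_id]
        rfl
      rw [h1, ZMod.val_natCast]
    have hival : i.val + 1 ≤ p := ZMod.val_lt i
    rcases lt_or_eq_of_le hival with hlt | heq
    · have h2 : (i + 1 : ZMod p).val = i.val + 1 := by rw [hvadd, Nat.mod_eq_of_lt hlt]
      have h3 : f (i + 1) = f i + 1 := by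
        rw [hf_def]
        dsimp only
        rw [h2]
        push_cast
        ring
      rw [h3]
    · have h2 : (i + 1 : ZMod p).val = 0 := by rw [hvadd, heq, Nat.mod_self]
      have h3 : f (i + 1) = 0 := by rw [hf_def]; dsimp only; rw [h2]; simp
      have h4 : f i + 1 = d := by
        rw [hf_def]
        dsimp only
        calc ((i.val : ℕ) : ZMod l) + 1 = ((i.val + 1 : ℕ) : ZMod l) := by push_cast; ring
          _ = ((p : ℕ) : ZMod l) := by rw [heq]
          _ = d := hdl
      rw [h3, h4]
      have h5 := hper 0
      rw [zero_add] at h5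
      exact h5.symm
  have hv' : ∀ i : ZMod p, v (f i + 1) = v (f (i + 1)) :=
    fun i => (congrArg Sigma.fst (hbs i)).symm
  refine ⟨p, fun i => v (f i), fun i => homCast V (hv' i) (a (f i)), ⟨hp0, ?_⟩, hpl⟩
  intro i
  rw [arrA_homCast, arrA_homCast]
  have h2 : arrA K V I (a (f (i + 1))) = arrA K V I (a (f i + 1)) :=
    arrA_congr_bslot K V I v a (hbs i)
  rw [h2]
  exact ha.2 (f i)

end Stmt12Cycle




/-- Let `A = KQ/I` be a bounded quiver algebra and let `a_1 ⋯ a_l` be a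
`2`-truncated oriented cycle in `A` of minimal length.  Then for every `m ≥ 1` the `l`
rotations of the `(lm)`-tuple obtained by repeating the cycle `m` times are `K`-linearly
independent elements of `C̄_S(A)_{lm-1} = A ⊗_{Sᵉ} J^{⊗_S (lm-1)}`. -/
theorem stmt12 (K : Type u) [Field K] (V : Type u) [Quiver.{u} V]
    [Fintype V] [∀ v w : V, Fintype (v ⟶ w)]
    (I : TwoSidedIdeal (PathAlg K V)) (hI : IsAdmissible K V I)
    (l : ℕ) (v : ZMod l → V) (a : ∀ i : ZMod l, v i ⟶ v (i + 1))
    (ha : IsTwoTruncatedCycle K V I v a)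
    (hmin : ∀ (l' : ℕ) (v' : ZMod l' → V) (a' : ∀ i : ZMod l', v' i ⟶ v' (i + 1)),
      IsTwoTruncatedCycle K V I v' a' → l ≤ l') :
    ∀ m : ℕ, 1 ≤ m →
      LinearIndependent K
        (fun j : ZMod l => (relSub K V I (l * m - 1)).mkQ (xiLift K V I v a (l * m - 1) j)) := by
  intro m hm
  obtain ⟨hl0, htr⟩ := ha
  haveI : NeZero l := ⟨hl0.ne'⟩
  obtain ⟨N, hN2, hNI, hI2⟩ := hI
  set n := l * m - 1 with hn_def
  have hlm : 0 < l * m := Nat.mul_pos hl0 hm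
  have hn1 : n + 1 = l * m := by omega
  have hn : ((n + 1 : ℕ) : ZMod l) = 0 := by
    rw [hn1, Nat.cast_mul, ZMod.natCast_self, zero_mul]
  have hdelta : ∀ j k : ZMod l, PhiF K V I hI2 v a n k (xiLift K V I v a n j)
      = if j = k then 1 else 0 := by
    intro j k
    rw [PhiF_xi]
    by_cases hjk : j = k
    · subst hjk; simp
    · rw [if_neg hjk, if_neg ?_]
      rintro ⟨h0, hrest⟩
      have hcn : ∀ c : ℕ, c ≤ n →
          bslot V v a (j + (c : ZMod l)) = bslot V v a (k + (c : ZMod l)) := by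
        intro c hc
        cases c with
        | zero => simpa using h0
        | succ c =>
          have h1 := hrest ⟨c, by omega⟩
          have he : ∀ s : ZMod l, s + 1 + (((⟨c, by omega⟩ : Fin n) : ℕ) : ZMod l)
              = s + ((c + 1 : ℕ) : ZMod l) := by
            intro s
            show s + 1 + ((c : ℕ) : ZMod l) = s + ((c + 1 : ℕ) : ZMod l)
            push_cast
            ring
          rwa [he j, he k] at h1
      have hper : ∀ i : ZMod l, bslot V v a (i + (j - k)) = bslot V v a i := by
        intro i
        have hcv : (((i - k).val : ℕ) : ZMod l) = i - k := by
          rw [ZMod.natCast_val, ZMod.cast_id]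
        have hle : (i - k).val ≤ n := by
          have h1 : (i - k).val < l := ZMod.val_lt _
          have h2 : l ≤ n + 1 := by rw [hn1]; exact Nat.le_mul_of_pos_right l hm
          omega
        have h3 := hcn (i - k).val hle
        rw [hcv] at h3
        have e1 : k + (i - k) = i := by ring
        have e2 : j + (i - k) = i + (j - k) := by ring
        rw [e1, e2] at h3
        exact h3
      obtain ⟨l', v', a', htr', hlt⟩ :=
        shorter_cycle K V I v a ⟨hl0, htr⟩ (j - k) (sub_ne_zero.mpr hjk) hper
      exact absurd (hmin l' v' a' htr') (by omega)
  rw [Fintype.linearIndependent_iff]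
  intro g hg j
  have hmem : (∑ i : ZMod l, g i • xiLift K V I v a n i) ∈ relSub K V I n := by
    have hq : (relSub K V I n).mkQ (∑ i : ZMod l, g i • xiLift K V I v a n i) = 0 := by
      rw [map_sum]
      simp only [map_smul]
      exact hg
    rwa [Submodule.mkQ_apply, Submodule.Quotient.mk_eq_zero] at hq
  have h0 : (∑ i : ZMod l, g i • xiLift K V I v a n i) ∈
      LinearMap.ker (PhiF K V I hI2 v a n j) :=
    PhiF_relSub K V I hI2 v a n j hn hmem
  have h1 := LinearMap.mem_ker.mp h0
  rw [map_sum] at h1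
  simp only [map_smul, smul_eq_mul, hdelta, mul_ite, mul_one, mul_zero] at h1
  rwa [Finset.sum_ite_eq' Finset.univ j g, if_pos (Finset.mem_univ j)] at h1
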